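/- The class 𝒪^{ℏ} is a local ring: it is closed under the Cauchy product (A·B)(m,n) = Σ_{m₁+m₂=m} Σ_{n₁+n₂=n} A(m₁,n₁)B(m₂,n₂), and every A ∈ 𝒪^{ℏ} with A(0,0) ≠ 0 has its Cauchy-product inverse again in 𝒪^{ℏ}, i.e. the inverse family satisfies conditions (0), (i), (ii) below with possibly different constants. -/

import Mathlib

open scoped BigOperators Classical

/-- `|m|₀ = ∑_{a=1}^r m_a`, the weight of a multi-index `m ∈ ℕ^s` in the first `r`
(exponential) variables. -/
def weight0 (s r : ℕ) (hrs : r ≤ s) (m : Fin s → ℕ) : ℕ :=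
  ∑ a : Fin r, m (Fin.castLE hrs a)

/-- Membership in the class `𝒪^{ℏ}` of coefficient families `A : ℕ^s × ℕ → ℂ`:
(0) for each `m` only finitely many `n` have `A(m,n) ≠ 0`;
(i) `A(m,n) = 0` whenever `|m|₀ = 0` and `n > 0`;
(ii) there are `B, C > 0` with `|A(m,n)| ≤ B C^{|m|+n} |m|₀^n` (convention `0⁰ = 1`). -/
def MemOhbar (s r : ℕ) (hrs : r ≤ s) (A : (Fin s → ℕ) → ℕ → ℂ) : Prop :=
  (∀ m : Fin s → ℕ, {n : ℕ | A m n ≠ 0}.Finite) ∧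
  (∀ (m : Fin s → ℕ) (n : ℕ), weight0 s r hrs m = 0 → 0 < n → A m n = 0) ∧
  (∃ B C : ℝ, 0 < B ∧ 0 < C ∧ ∀ (m : Fin s → ℕ) (n : ℕ),
    ‖A m n‖ ≤ B * C ^ ((∑ j, m j) + n) * (weight0 s r hrs m : ℝ) ^ n)

/-- The Cauchy product `(A·B)(m,n) = ∑_{m₁+m₂=m} ∑_{n₁+n₂=n} A(m₁,n₁) B(m₂,n₂)` of two
coefficient families indexed by `ℕ^s × ℕ` (a finite sum, written as a `tsum`). -/
noncomputable def cauchyProdN (s : ℕ) (A B : (Fin s → ℕ) → ℕ → ℂ) :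
    (Fin s → ℕ) → ℕ → ℂ :=
  fun m n => ∑' p : (Fin s → ℕ) × ℕ,
    if p.1 ≤ m ∧ p.2 ≤ n then A p.1 p.2 * B (fun j => m j - p.1 j) (n - p.2) else 0

/-- The identity coefficient family: value `1` at `(m,n) = (0,0)` and `0` elsewhere. -/
def deltaFam (s : ℕ) : (Fin s → ℕ) → ℕ → ℂ :=
  fun m n => if m = 0 ∧ n = 0 then 1 else 0

namespace OhbarAux

def box (s : ℕ) (m : Fin s → ℕ) (n : ℕ) : Finset ((Fin s → ℕ) × ℕ) :=
  (Fintype.piFinset fun j => Finset.range (m j + 1)) ×ˢ Finset.range (n + 1)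

lemma mem_box {s : ℕ} {m : Fin s → ℕ} {n : ℕ} {q : (Fin s → ℕ) × ℕ} :
    q ∈ box s m n ↔ (∀ j, q.1 j ≤ m j) ∧ q.2 ≤ n := by
  simp [box, Fintype.mem_piFinset, Nat.lt_succ_iff]

lemma cauchy_eq_sum {s : ℕ} (A B : (Fin s → ℕ) → ℕ → ℂ) (m : Fin s → ℕ) (n : ℕ) :
    cauchyProdN s A B m n =
      ∑ q ∈ box s m n, A q.1 q.2 * B (fun j => m j - q.1 j) (n - q.2) := by
  rw [cauchyProdN, tsum_eq_sum (s := box s m n)]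
  · refine Finset.sum_congr rfl fun q hq => ?_
    rw [mem_box] at hq
    exact if_pos ⟨fun j => hq.1 j, hq.2⟩
  · intro q hq
    rw [mem_box] at hq
    rw [if_neg]
    intro ⟨h1, h2⟩
    exact hq ⟨fun j => h1 j, h2⟩

lemma zero_mem_box {s : ℕ} (m : Fin s → ℕ) (n : ℕ) : ((0 : Fin s → ℕ), (0:ℕ)) ∈ box s m n := by
  rw [mem_box]; exact ⟨fun j => Nat.zero_le _, Nat.zero_le _⟩

noncomputable def invF (s : ℕ) (A : (Fin s → ℕ) → ℕ → ℂ) : ((Fin s → ℕ) × ℕ) → ℂ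
  | p =>
    if p = (0, 0) then (A 0 0)⁻¹
    else - (A 0 0)⁻¹ * ∑ q ∈ ((box s p.1 p.2).erase (0, 0)).attach,
        A q.1.1 q.1.2 * invF s A (fun j => p.1 j - q.1.1 j, p.2 - q.1.2)
termination_by p => (∑ j, p.1 j) + p.2
decreasing_by
  have hq := q.2
  rw [Finset.mem_erase, mem_box] at hq
  obtain ⟨hne, hle, hle2⟩ := hq
  have h1 : ∑ j, (p.1 j - q.1.1 j) = (∑ j, p.1 j) - ∑ j, q.1.1 j := by
    rw [eq_tsub_iff_add_eq_of_le (Finset.sum_le_sum fun j _ => hle j), ← Finset.sum_add_distrib]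
    exact Finset.sum_congr rfl fun j _ => Nat.sub_add_cancel (hle j)
  have hpos : 0 < (∑ j, q.1.1 j) + q.1.2 := by
    rcases Nat.eq_zero_or_pos ((∑ j, q.1.1 j) + q.1.2) with h | h
    · exfalso
      apply hne
      have h2 : ∑ j, q.1.1 j = 0 := by omega
      have h3 : q.1.2 = 0 := by omega
      have h4 : q.1.1 = 0 := by
        funext j
        exact (Finset.sum_eq_zero_iff.mp h2) j (Finset.mem_univ j)
      exact Prod.ext h4 h3
    · exact h
  have hs : ∑ j, q.1.1 j ≤ ∑ j, p.1 j := Finset.sum_le_sum fun j _ => hle j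
  show (∑ j, (p.1 j - q.1.1 j)) + (p.2 - q.1.2) < (∑ j, p.1 j) + p.2
  simp only [h1]
  omega


lemma measure_lt {s : ℕ} {m : Fin s → ℕ} {n : ℕ} {q : (Fin s → ℕ) × ℕ}
    (hq : q ∈ (box s m n).erase (0, 0)) :
    (∑ j, (m j - q.1 j)) + (n - q.2) < (∑ j, m j) + n := by
  rw [Finset.mem_erase, mem_box] at hq
  obtain ⟨hne, hle, hle2⟩ := hq
  have h1 : ∑ j, (m j - q.1 j) = (∑ j, m j) - ∑ j, q.1 j := by
    rw [eq_tsub_iff_add_eq_of_le (Finset.sum_le_sum fun j _ => hle j), ← Finset.sum_add_distrib]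
    exact Finset.sum_congr rfl fun j _ => Nat.sub_add_cancel (hle j)
  have hpos : 0 < (∑ j, q.1 j) + q.2 := by
    rcases Nat.eq_zero_or_pos ((∑ j, q.1 j) + q.2) with h | h
    · exfalso
      apply hne
      have h2 : ∑ j, q.1 j = 0 := by omega
      have h4 : q.1 = 0 := by
        funext j
        exact (Finset.sum_eq_zero_iff.mp h2) j (Finset.mem_univ j)
      exact Prod.ext h4 (by omega)
    · exact h
  have hs : ∑ j, q.1 j ≤ ∑ j, m j := Finset.sum_le_sum fun j _ => hle j
  omega

lemma invF_zero {s : ℕ} (A : (Fin s → ℕ) → ℕ → ℂ) : invF s A (0, 0) = (A 0 0)⁻¹ := by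
  rw [invF]
  simp

lemma invF_ne {s : ℕ} (A : (Fin s → ℕ) → ℕ → ℂ) {p : (Fin s → ℕ) × ℕ} (hp : p ≠ (0, 0)) :
    invF s A p = - (A 0 0)⁻¹ * ∑ q ∈ (box s p.1 p.2).erase (0, 0),
        A q.1 q.2 * invF s A (fun j => p.1 j - q.1 j, p.2 - q.2) := by
  rw [invF, if_neg hp, ← Finset.sum_attach ((box s p.1 p.2).erase (0, 0))
    (fun q => A q.1 q.2 * invF s A (fun j => p.1 j - q.1 j, p.2 - q.2))]

/-- the splitting of the Cauchy product sum at `(0,0)` -/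
lemma cauchy_split {s : ℕ} (A B : (Fin s → ℕ) → ℕ → ℂ) (m : Fin s → ℕ) (n : ℕ) :
    cauchyProdN s A B m n = A 0 0 * B m n +
      ∑ q ∈ (box s m n).erase (0, 0), A q.1 q.2 * B (fun j => m j - q.1 j) (n - q.2) := by
  rw [cauchy_eq_sum, ← Finset.add_sum_erase _ _ (zero_mem_box m n)]
  have h1 : (fun j => m j - (0 : Fin s → ℕ) j) = m := by funext j; simp
  rw [h1]
  simp

lemma cauchy_invF {s : ℕ} (A : (Fin s → ℕ) → ℕ → ℂ) (hA : A 0 0 ≠ 0)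
    (m : Fin s → ℕ) (n : ℕ) :
    cauchyProdN s A (fun m' n' => invF s A (m', n')) m n = deltaFam s m n := by
  rw [cauchy_split]
  by_cases hp : ((m, n) : (Fin s → ℕ) × ℕ) = (0, 0)
  · obtain ⟨hm, hn⟩ := Prod.mk.injEq .. ▸ hp
    subst hm; subst hn
    have he : ∑ q ∈ (box s (0 : Fin s → ℕ) 0).erase (0, 0),
        A q.1 q.2 * invF s A (fun j => (0 : Fin s → ℕ) j - q.1 j, 0 - q.2) = 0 := by
      apply Finset.sum_eq_zero
      intro q hq
      rw [Finset.mem_erase, mem_box] at hq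
      exfalso
      apply hq.1
      have : q.1 = 0 := funext fun j => Nat.le_zero.mp (hq.2.1 j)
      exact Prod.ext this (Nat.le_zero.mp hq.2.2)
    rw [he, invF_zero, mul_inv_cancel₀ hA, deltaFam, if_pos ⟨rfl, rfl⟩, add_zero]
  · have := invF_ne A hp
    simp only at this
    rw [this, deltaFam, if_neg (by
      intro ⟨h1, h2⟩
      exact hp (Prod.ext h1 h2))]
    rw [neg_mul, mul_neg, ← mul_assoc, mul_inv_cancel₀ hA, one_mul, neg_add_cancel]

lemma invF_unique {s : ℕ} (A A'' : (Fin s → ℕ) → ℕ → ℂ) (hA : A 0 0 ≠ 0)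
    (h2 : cauchyProdN s A A'' = deltaFam s) :
    ∀ m n, A'' m n = invF s A (m, n) := by
  have key : ∀ k : ℕ, ∀ m n, (∑ j, m j) + n = k → A'' m n = invF s A (m, n) := by
    intro k
    induction k using Nat.strong_induction_on with
    | _ k ih =>
      intro m n hk
      have E1 : cauchyProdN s A A'' m n = deltaFam s m n := by rw [h2]
      have E2 := cauchy_invF A hA m n
      rw [cauchy_split] at E1 E2
      have hsum : ∑ q ∈ (box s m n).erase (0, 0),
          A q.1 q.2 * A'' (fun j => m j - q.1 j) (n - q.2) =
          ∑ q ∈ (box s m n).erase (0, 0),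
          A q.1 q.2 * invF s A (fun j => m j - q.1 j, n - q.2) := by
        refine Finset.sum_congr rfl fun q hq => ?_
        rw [ih _ (hk ▸ measure_lt hq) _ _ rfl]
      rw [hsum] at E1
      have : A 0 0 * A'' m n = A 0 0 * invF s A (m, n) := by
        have := E1.trans E2.symm
        simpa using this
      exact mul_left_cancel₀ hA this
  exact fun m n => key _ m n rfl


lemma pow_mul_pow_le_add {a b : ℝ} (ha : 0 ≤ a) (hb : 0 ≤ b) (i j : ℕ) :
    a ^ i * b ^ j ≤ (a + b) ^ (i + j) := by
  rw [pow_add]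
  exact mul_le_mul (pow_le_pow_left₀ ha (le_add_of_nonneg_right hb) i)
    (pow_le_pow_left₀ hb (le_add_of_nonneg_left ha) j) (pow_nonneg hb j)
    (pow_nonneg (by linarith) i)

lemma weight0_split {s r : ℕ} (hrs : r ≤ s) {m q1 : Fin s → ℕ} (hle : ∀ j, q1 j ≤ m j) :
    weight0 s r hrs m = weight0 s r hrs q1 + weight0 s r hrs (fun j => m j - q1 j) := by
  rw [weight0, weight0, weight0, ← Finset.sum_add_distrib]
  exact Finset.sum_congr rfl fun a _ => (Nat.add_sub_cancel' (hle _)).symm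

lemma sum_split {s : ℕ} {m q1 : Fin s → ℕ} (hle : ∀ j, q1 j ≤ m j) :
    (∑ j, m j) = (∑ j, q1 j) + ∑ j, (m j - q1 j) := by
  rw [← Finset.sum_add_distrib]
  exact Finset.sum_congr rfl fun a _ => (Nat.add_sub_cancel' (hle _)).symm

lemma weight0_pow_bound {s r : ℕ} (hrs : r ≤ s) {m q1 : Fin s → ℕ} {n q2 : ℕ}
    (hle : ∀ j, q1 j ≤ m j) (hq2 : q2 ≤ n) :
    (weight0 s r hrs q1 : ℝ) ^ q2 * (weight0 s r hrs (fun j => m j - q1 j) : ℝ) ^ (n - q2)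
      ≤ (weight0 s r hrs m : ℝ) ^ n := by
  have h := pow_mul_pow_le_add (Nat.cast_nonneg (weight0 s r hrs q1))
    (Nat.cast_nonneg (weight0 s r hrs (fun j => m j - q1 j))) q2 (n - q2)
  rw [Nat.add_sub_cancel' hq2] at h
  calc _ ≤ ((weight0 s r hrs q1 : ℝ) + (weight0 s r hrs (fun j => m j - q1 j) : ℝ)) ^ n := h
    _ = _ := by rw [← Nat.cast_add, ← weight0_split hrs hle]

lemma weight0_eq_zero_of_le {s r : ℕ} (hrs : r ≤ s) {m q1 : Fin s → ℕ}
    (hle : ∀ j, q1 j ≤ m j) (hw : weight0 s r hrs m = 0) : weight0 s r hrs q1 = 0 := by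
  have := weight0_split hrs hle
  omega

lemma geom_le_two {u : ℝ} (hu : 0 ≤ u) (hu2 : u ≤ 1 / 2) (N : ℕ) :
    ∑ i ∈ Finset.range N, u ^ i ≤ 2 := by
  have h1 := geom_sum_mul u N
  have h2 : (0 : ℝ) ≤ u ^ N := pow_nonneg hu N
  have h3 : (0 : ℝ) ≤ ∑ i ∈ Finset.range N, u ^ i :=
    Finset.sum_nonneg fun i _ => pow_nonneg hu i
  nlinarith

lemma box_sum_le {s : ℕ} (m : Fin s → ℕ) (n : ℕ) {u : ℝ} (hu : 0 ≤ u) (hu2 : u ≤ 1 / 2) :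
    ∑ q ∈ box s m n, u ^ ((∑ j, q.1 j) + q.2) ≤ 2 ^ (s + 1) := by
  rw [box, Finset.sum_product]
  have key : ∀ q1 : Fin s → ℕ, ∀ q2 ∈ Finset.range (n + 1),
      u ^ ((∑ j, q1 j) + q2) = u ^ (∑ j, q1 j) * u ^ q2 := fun _ _ _ => pow_add u _ _
  calc ∑ q1 ∈ Fintype.piFinset (fun j => Finset.range (m j + 1)),
        ∑ q2 ∈ Finset.range (n + 1), u ^ ((∑ j, q1 j) + q2)
      = (∑ q1 ∈ Fintype.piFinset (fun j => Finset.range (m j + 1)), u ^ (∑ j, q1 j)) *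
        (∑ q2 ∈ Finset.range (n + 1), u ^ q2) := by
        rw [Finset.sum_mul_sum]
        exact Finset.sum_congr rfl fun q1 _ => Finset.sum_congr rfl fun q2 hq2 =>
          key q1 q2 hq2
    _ ≤ 2 ^ s * 2 := by
        apply mul_le_mul _ (geom_le_two hu hu2 _) (Finset.sum_nonneg fun i _ => pow_nonneg hu i)
          (by positivity)
        have hfac : ∑ q1 ∈ Fintype.piFinset (fun j => Finset.range (m j + 1)), u ^ (∑ j, q1 j)
            = ∏ j : Fin s, ∑ i ∈ Finset.range (m j + 1), u ^ i := by
          rw [Finset.prod_univ_sum]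
          exact Finset.sum_congr rfl fun q1 _ =>
            (Finset.prod_pow_eq_pow_sum Finset.univ q1 u).symm
        rw [hfac]
        calc ∏ j : Fin s, ∑ i ∈ Finset.range (m j + 1), u ^ i
            ≤ ∏ j : Fin s, (2 : ℝ) := Finset.prod_le_prod
              (fun j _ => Finset.sum_nonneg fun i _ => pow_nonneg hu i)
              (fun j _ => geom_le_two hu hu2 _)
          _ = 2 ^ s := by simp
    _ = 2 ^ (s + 1) := by ring

lemma support_bound {s : ℕ} {A : (Fin s → ℕ) → ℕ → ℂ}
    (h0 : ∀ m, {n | A m n ≠ 0}.Finite) (m : Fin s → ℕ) :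
    ∃ N, ∀ m' n, (∀ j, m' j ≤ m j) → N < n → A m' n = 0 := by
  refine ⟨(Fintype.piFinset fun j => Finset.range (m j + 1)).sup
    (fun m' => (h0 m').toFinset.sup id), fun m' n hle hn => ?_⟩
  by_contra hne
  have hmem : m' ∈ Fintype.piFinset fun j => Finset.range (m j + 1) := by
    rw [Fintype.mem_piFinset]
    exact fun j => Finset.mem_range.mpr (Nat.lt_succ_of_le (hle j))
  have h1 : n ∈ (h0 m').toFinset := by
    rw [Set.Finite.mem_toFinset]
    exact hne
  have h2 : n ≤ (h0 m').toFinset.sup id := Finset.le_sup (f := id) h1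
  have h3 : (h0 m').toFinset.sup id ≤ (Fintype.piFinset fun j => Finset.range (m j + 1)).sup
      (fun m' => (h0 m').toFinset.sup id) :=
    Finset.le_sup (f := fun m' => (h0 m').toFinset.sup id) hmem
  omega


lemma closure {s r : ℕ} (hrs : r ≤ s) (A B : (Fin s → ℕ) → ℕ → ℂ)
    (hA : MemOhbar s r hrs A) (hB : MemOhbar s r hrs B) :
    MemOhbar s r hrs (cauchyProdN s A B) := by
  obtain ⟨hA0, hA1, BA, CA, hBA, hCA, hA2⟩ := hA
  obtain ⟨hB0, hB1, BB, CB, hBB, hCB, hB2⟩ := hB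
  refine ⟨?_, ?_, ?_⟩
  · intro m
    obtain ⟨NA, hNA⟩ := support_bound hA0 m
    obtain ⟨NB, hNB⟩ := support_bound hB0 m
    apply Set.Finite.subset (Set.finite_Iic (NA + NB))
    intro n hn
    simp only [Set.mem_setOf_eq] at hn
    rw [cauchy_eq_sum] at hn
    obtain ⟨q, hqmem, hq⟩ := Finset.exists_ne_zero_of_sum_ne_zero hn
    rw [mem_box] at hqmem
    have h1 : A q.1 q.2 ≠ 0 := fun h => hq (by rw [h, zero_mul])
    have h2 : B (fun j => m j - q.1 j) (n - q.2) ≠ 0 := fun h => hq (by rw [h, mul_zero])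
    have e1 : q.2 ≤ NA := by
      by_contra h
      exact h1 (hNA q.1 q.2 hqmem.1 (by omega))
    have e2 : n - q.2 ≤ NB := by
      by_contra h
      exact h2 (hNB _ _ (fun j => Nat.sub_le _ _) (by omega))
    have := hqmem.2
    simp only [Set.mem_Iic]
    omega
  · intro m n hw hn
    rw [cauchy_eq_sum]
    apply Finset.sum_eq_zero
    intro q hq
    rw [mem_box] at hq
    rcases Nat.eq_zero_or_pos q.2 with h | h
    · rw [hB1 _ _ (weight0_eq_zero_of_le hrs (fun j => Nat.sub_le _ _) hw) (by omega), mul_zero]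
    · rw [hA1 _ _ (weight0_eq_zero_of_le hrs hq.1 hw) h, zero_mul]
  · refine ⟨BA * BB, 2 * max CA CB, by positivity, by positivity, ?_⟩
    intro m n
    rw [cauchy_eq_sum]
    set C := max CA CB with hC
    set N := (∑ j, m j) + n with hN
    set w := (weight0 s r hrs m : ℝ) with hw
    have hw0 : 0 ≤ w := Nat.cast_nonneg _
    have hterm : ∀ q ∈ box s m n,
        ‖A q.1 q.2 * B (fun j => m j - q.1 j) (n - q.2)‖
        ≤ BA * BB * C ^ N * w ^ n := by
      intro q hq
      rw [mem_box] at hq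
      rw [norm_mul]
      have hk : ((∑ j, q.1 j) + q.2) + ((∑ j, (m j - q.1 j)) + (n - q.2)) = N := by
        have := sum_split hq.1
        have := hq.2
        omega
      have b1 : CA ^ ((∑ j, q.1 j) + q.2) * CB ^ ((∑ j, (m j - q.1 j)) + (n - q.2))
          ≤ C ^ N := by
        rw [← hk, pow_add C]
        exact mul_le_mul (pow_le_pow_left₀ hCA.le (le_max_left _ _) _)
          (pow_le_pow_left₀ hCB.le (le_max_right _ _) _) (by positivity) (by positivity)
      have b2 := weight0_pow_bound hrs hq.1 hq.2
      calc ‖A q.1 q.2‖ * ‖B (fun j => m j - q.1 j) (n - q.2)‖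
          ≤ (BA * CA ^ ((∑ j, q.1 j) + q.2) * (weight0 s r hrs q.1 : ℝ) ^ q.2) *
            (BB * CB ^ ((∑ j, (m j - q.1 j)) + (n - q.2)) *
              (weight0 s r hrs (fun j => m j - q.1 j) : ℝ) ^ (n - q.2)) :=
            mul_le_mul (hA2 _ _) (hB2 _ _) (norm_nonneg _) (by positivity)
        _ = (BA * BB) * ((CA ^ ((∑ j, q.1 j) + q.2) *
              CB ^ ((∑ j, (m j - q.1 j)) + (n - q.2))) *
              ((weight0 s r hrs q.1 : ℝ) ^ q.2 *
               (weight0 s r hrs (fun j => m j - q.1 j) : ℝ) ^ (n - q.2))) := by ring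
        _ ≤ (BA * BB) * (C ^ N * w ^ n) := by
            apply mul_le_mul_of_nonneg_left _ (by positivity)
            exact mul_le_mul b1 b2 (by positivity) (by positivity)
        _ = BA * BB * C ^ N * w ^ n := by ring
    have hcard : ((box s m n).card : ℝ) ≤ 2 ^ N := by
      have hnat : (box s m n).card ≤ 2 ^ N := by
        rw [box, Finset.card_product, Fintype.card_piFinset]
        simp only [Finset.card_range]
        calc (∏ j, (m j + 1)) * (n + 1) ≤ (∏ j : Fin s, 2 ^ (m j)) * 2 ^ n :=
              Nat.mul_le_mul (Finset.prod_le_prod' fun j _ => Nat.lt_two_pow_self (n := m j))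
                (Nat.lt_two_pow_self (n := n))
          _ = 2 ^ N := by
              rw [Finset.prod_pow_eq_pow_sum, ← pow_add]
      calc ((box s m n).card : ℝ) ≤ ((2 ^ N : ℕ) : ℝ) := Nat.cast_le.mpr hnat
        _ = 2 ^ N := by push_cast; ring
    calc ‖∑ q ∈ box s m n, A q.1 q.2 * B (fun j => m j - q.1 j) (n - q.2)‖
        ≤ ∑ q ∈ box s m n, ‖A q.1 q.2 * B (fun j => m j - q.1 j) (n - q.2)‖ :=
          norm_sum_le _ _
      _ ≤ (box s m n).card • (BA * BB * C ^ N * w ^ n) :=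
          Finset.sum_le_card_nsmul _ _ _ hterm
      _ = ((box s m n).card : ℝ) * (BA * BB * C ^ N * w ^ n) := by
          rw [nsmul_eq_mul]
      _ ≤ 2 ^ N * (BA * BB * C ^ N * w ^ n) :=
          mul_le_mul_of_nonneg_right hcard (by positivity)
      _ = BA * BB * (2 * C) ^ N * w ^ n := by
          rw [mul_pow]; ring


lemma pos_of_ne_zero {s : ℕ} {q : (Fin s → ℕ) × ℕ} (hne : q ≠ (0, 0)) :
    0 < (∑ j, q.1 j) + q.2 := by
  rcases Nat.eq_zero_or_pos ((∑ j, q.1 j) + q.2) with h | h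
  · exfalso
    apply hne
    have h2 : ∑ j, q.1 j = 0 := by omega
    have h4 : q.1 = 0 := funext fun j => (Finset.sum_eq_zero_iff.mp h2) j (Finset.mem_univ j)
    exact Prod.ext h4 (by omega)
  · exact h

lemma weight0_zero_fun {s r : ℕ} (hrs : r ≤ s) : weight0 s r hrs 0 = 0 := by
  simp [weight0]

lemma invF_weight_zero {s r : ℕ} (hrs : r ≤ s) {A : (Fin s → ℕ) → ℕ → ℂ}
    (hA1 : ∀ (m : Fin s → ℕ) (n : ℕ), weight0 s r hrs m = 0 → 0 < n → A m n = 0) :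
    ∀ (m : Fin s → ℕ) (n : ℕ), weight0 s r hrs m = 0 → 0 < n → invF s A (m, n) = 0 := by
  have key : ∀ k : ℕ, ∀ (m : Fin s → ℕ) (n : ℕ), (∑ j, m j) + n = k →
      weight0 s r hrs m = 0 → 0 < n → invF s A (m, n) = 0 := by
    intro k
    induction k using Nat.strong_induction_on with
    | _ k ih =>
      intro m n hk hw hn
      have hp : ((m, n) : (Fin s → ℕ) × ℕ) ≠ (0, 0) := by
        intro h
        have := (Prod.mk.injEq .. ▸ h).2
        omega
      rw [invF_ne A hp]
      have hz : ∑ q ∈ (box s m n).erase (0, 0),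
          A q.1 q.2 * invF s A (fun j => m j - q.1 j, n - q.2) = 0 := by
        apply Finset.sum_eq_zero
        intro q hq
        have hml := measure_lt hq
        rw [Finset.mem_erase, mem_box] at hq
        rcases Nat.eq_zero_or_pos q.2 with h | h
        · rw [ih _ (by omega) _ _ rfl
            (weight0_eq_zero_of_le hrs (fun j => Nat.sub_le _ _) hw) (by omega), mul_zero]
        · rw [hA1 _ _ (weight0_eq_zero_of_le hrs hq.2.1 hw) h, zero_mul]
      rw [hz, mul_zero]
  exact fun m n => key _ m n rfl

lemma invF_support {s r : ℕ} (hrs : r ≤ s) {A : (Fin s → ℕ) → ℕ → ℂ}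
    (hA0 : ∀ m, {n : ℕ | A m n ≠ 0}.Finite)
    (hA1 : ∀ (m : Fin s → ℕ) (n : ℕ), weight0 s r hrs m = 0 → 0 < n → A m n = 0)
    (m : Fin s → ℕ) : {n : ℕ | invF s A (m, n) ≠ 0}.Finite := by
  obtain ⟨N, hN⟩ := support_bound hA0 m
  have key : ∀ k : ℕ, ∀ (m' : Fin s → ℕ) (n : ℕ), ∑ j, m' j = k →
      (∀ j, m' j ≤ m j) → k * N < n → invF s A (m', n) = 0 := by
    intro k
    induction k using Nat.strong_induction_on with
    | _ k ih =>
      intro m' n hk hle hn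
      rcases Nat.eq_zero_or_pos k with hk0 | hkpos
      · subst hk0
        have hm0 : m' = 0 := funext fun j => (Finset.sum_eq_zero_iff.mp hk) j (Finset.mem_univ j)
        subst hm0
        exact invF_weight_zero hrs hA1 _ _ (weight0_zero_fun hrs) (by omega)
      · have hp : ((m', n) : (Fin s → ℕ) × ℕ) ≠ (0, 0) := by
          intro h
          have := (Prod.mk.injEq .. ▸ h).2
          omega
        rw [invF_ne A hp]
        have hz : ∑ q ∈ (box s m' n).erase (0, 0),
            A q.1 q.2 * invF s A (fun j => m' j - q.1 j, n - q.2) = 0 := by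
          apply Finset.sum_eq_zero
          intro q hq
          rw [Finset.mem_erase, mem_box] at hq
          by_cases hA : A q.1 q.2 = 0
          · rw [hA, zero_mul]
          · -- A q.1 q.2 ≠ 0 forces q.2 ≤ N and q.1 ≠ 0
            have hq2 : q.2 ≤ N := by
              by_contra h
              exact hA (hN q.1 q.2 (fun j => le_trans (hq.2.1 j) (hle j)) (by omega))
            have hq1ne : q.1 ≠ 0 := by
              intro h
              rcases Nat.eq_zero_or_pos q.2 with h2 | h2
              · exact hq.1 (Prod.ext h h2)
              · exact hA (by rw [h]; exact hA1 _ _ (weight0_zero_fun hrs) h2)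
            have hq1pos : 0 < ∑ j, q.1 j := by
              rcases Nat.eq_zero_or_pos (∑ j, q.1 j) with h2 | h2
              · exact absurd (funext fun j =>
                  (Finset.sum_eq_zero_iff.mp h2) j (Finset.mem_univ j)) hq1ne
              · exact h2
            have hsplit : ∑ j, (m' j - q.1 j) = k - ∑ j, q.1 j := by
              have := sum_split hq.2.1
              omega
            have hsle : ∑ j, q.1 j ≤ k := by
              have := sum_split hq.2.1
              omega
            rw [ih (k - ∑ j, q.1 j) (by omega) _ _ hsplit
              (fun j => le_trans (Nat.sub_le _ _) (hle j))
              (by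
                have h1 : (k - ∑ j, q.1 j) * N ≤ (k - 1) * N := Nat.mul_le_mul_right N (by omega)
                have h2 : (k - 1) * N + N = k * N := by
                  cases k with
                  | zero => omega
                  | succ k' => simp [Nat.succ_mul]
                omega), mul_zero]
        rw [hz, mul_zero]
  apply Set.Finite.subset (Set.finite_Iic ((∑ j, m j) * N))
  intro n hn
  simp only [Set.mem_setOf_eq] at hn
  simp only [Set.mem_Iic]
  by_contra h
  exact hn (key _ m n rfl (fun j => le_refl _) (by omega))


lemma invF_bound {s r : ℕ} (hrs : r ≤ s) {A : (Fin s → ℕ) → ℕ → ℂ}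
    {BA CA : ℝ} (hBA : 0 < BA) (hCA : 0 < CA)
    (hA2 : ∀ (m : Fin s → ℕ) (n : ℕ),
      ‖A m n‖ ≤ BA * CA ^ ((∑ j, m j) + n) * (weight0 s r hrs m : ℝ) ^ n)
    (ha : A 0 0 ≠ 0) :
    ∃ K M : ℝ, 0 < K ∧ 0 < M ∧ ∀ (m : Fin s → ℕ) (n : ℕ),
      ‖invF s A (m, n)‖ ≤ K * M ^ ((∑ j, m j) + n) * (weight0 s r hrs m : ℝ) ^ n := by
  set a : ℝ := ‖A 0 0‖ with ha_def
  have hapos : 0 < a := by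
    rw [ha_def]
    exact norm_pos_iff.mpr ha
  set u : ℝ := min (1 / 2) (a / (BA * 2 ^ (s + 1))) with hu_def
  have hu0 : 0 < u := lt_min (by norm_num) (by positivity)
  have hu2 : u ≤ 1 / 2 := min_le_left _ _
  have hu1 : u ≤ 1 := le_trans hu2 (by norm_num)
  have hua : BA * u * 2 ^ (s + 1) ≤ a := by
    have h := min_le_right (1 / 2) (a / (BA * 2 ^ (s + 1)))
    rw [← hu_def] at h
    have h2 : u * (BA * 2 ^ (s + 1)) ≤ a := (le_div_iff₀ (by positivity)).mp h
    linarith [h2]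
  set M : ℝ := CA / u ^ 2 with hM_def
  have hMpos : 0 < M := by positivity
  have hCM : CA = M * u ^ 2 := by
    rw [hM_def, div_mul_cancel₀]
    positivity
  set K : ℝ := a⁻¹ with hK_def
  have hKpos : 0 < K := by positivity
  refine ⟨K, M, hKpos, hMpos, ?_⟩
  have key : ∀ k : ℕ, ∀ (m : Fin s → ℕ) (n : ℕ), (∑ j, m j) + n = k →
      ‖invF s A (m, n)‖ ≤
        K * M ^ ((∑ j, m j) + n) * (weight0 s r hrs m : ℝ) ^ n := by
    intro k
    induction k using Nat.strong_induction_on with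
    | _ k ih =>
      intro m n hk
      by_cases hp : ((m, n) : (Fin s → ℕ) × ℕ) = (0, 0)
      · obtain ⟨hm, hn⟩ := Prod.mk.injEq .. ▸ hp
        subst hm; subst hn
        rw [invF_zero, norm_inv]
        have h1 : (∑ j, (0 : Fin s → ℕ) j) + 0 = 0 := by simp
        rw [h1, pow_zero, pow_zero]
        rw [← ha_def, ← hK_def]
        linarith
      · set N := (∑ j, m j) + n with hN_def
        set w := (weight0 s r hrs m : ℝ) with hw_def
        have hw0 : 0 ≤ w := Nat.cast_nonneg _
        rw [invF_ne A hp]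
        simp only []
        rw [norm_mul, norm_neg, norm_inv, ← ha_def]
        have hterm : ∀ q ∈ (box s m n).erase (0, 0),
            ‖A q.1 q.2 * invF s A (fun j => m j - q.1 j, n - q.2)‖
              ≤ (BA * K * M ^ N * w ^ n * u) * u ^ ((∑ j, q.1 j) + q.2) := by
          intro q hq
          have hml := measure_lt hq
          rw [Finset.mem_erase, mem_box] at hq
          obtain ⟨hne, hle, hle2⟩ := hq
          set kq := (∑ j, q.1 j) + q.2 with hkq_def
          have hkq1 : 1 ≤ kq := pos_of_ne_zero hne
          have hsplit := sum_split hle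
          have hkqN : kq ≤ N := by
            have : ∑ j, q.1 j ≤ ∑ j, m j := Finset.sum_le_sum fun j _ => hle j
            omega
          have hrest : (∑ j, (m j - q.1 j)) + (n - q.2) = N - kq := by omega
          have hIH := ih _ (hk ▸ hml) (fun j => m j - q.1 j) (n - q.2) rfl
          rw [hrest] at hIH
          have e1 : CA ^ kq * M ^ (N - kq) = M ^ N * (u ^ kq * u ^ kq) := by
            calc CA ^ kq * M ^ (N - kq) = (M ^ kq * (u ^ 2) ^ kq) * M ^ (N - kq) := by
                  rw [hCM, mul_pow]
              _ = (M ^ kq * M ^ (N - kq)) * (u ^ 2) ^ kq := by ring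
              _ = M ^ N * (u ^ kq * u ^ kq) := by
                  rw [← pow_add, Nat.add_sub_cancel' hkqN, ← pow_mul, two_mul, pow_add u]
          have e2 : u ^ kq ≤ u := by
            calc u ^ kq ≤ u ^ 1 := pow_le_pow_of_le_one hu0.le hu1 hkq1
              _ = u := pow_one u
          have hwb := weight0_pow_bound hrs hle hle2
          rw [norm_mul]
          calc ‖A q.1 q.2‖ * ‖invF s A (fun j => m j - q.1 j, n - q.2)‖
              ≤ (BA * CA ^ kq * (weight0 s r hrs q.1 : ℝ) ^ q.2) *
                (K * M ^ (N - kq) * (weight0 s r hrs (fun j => m j - q.1 j) : ℝ) ^ (n - q.2)) :=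
                mul_le_mul (hA2 _ _) hIH (norm_nonneg _) (by positivity)
            _ = (BA * K) * ((CA ^ kq * M ^ (N - kq)) *
                ((weight0 s r hrs q.1 : ℝ) ^ q.2 *
                 (weight0 s r hrs (fun j => m j - q.1 j) : ℝ) ^ (n - q.2))) := by ring
            _ ≤ (BA * K) * ((M ^ N * (u ^ kq * u ^ kq)) * (w ^ n)) := by
                apply mul_le_mul_of_nonneg_left _ (by positivity)
                rw [e1]
                exact mul_le_mul_of_nonneg_left hwb (by positivity)
            _ ≤ (BA * K) * ((M ^ N * (u * u ^ kq)) * (w ^ n)) := by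
                apply mul_le_mul_of_nonneg_left _ (by positivity)
                apply mul_le_mul_of_nonneg_right _ (by positivity)
                apply mul_le_mul_of_nonneg_left _ (by positivity)
                exact mul_le_mul_of_nonneg_right e2 (by positivity)
            _ = (BA * K * M ^ N * w ^ n * u) * u ^ kq := by ring
        calc a⁻¹ * ‖∑ q ∈ (box s m n).erase (0, 0),
                A q.1 q.2 * invF s A (fun j => m j - q.1 j, n - q.2)‖
            ≤ a⁻¹ * ∑ q ∈ (box s m n).erase (0, 0),
                ‖A q.1 q.2 * invF s A (fun j => m j - q.1 j, n - q.2)‖ :=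
              mul_le_mul_of_nonneg_left (norm_sum_le _ _) (by positivity)
          _ ≤ a⁻¹ * ∑ q ∈ (box s m n).erase (0, 0),
                (BA * K * M ^ N * w ^ n * u) * u ^ ((∑ j, q.1 j) + q.2) := by
              apply mul_le_mul_of_nonneg_left _ (by positivity)
              exact Finset.sum_le_sum hterm
          _ = a⁻¹ * ((BA * K * M ^ N * w ^ n * u) *
                ∑ q ∈ (box s m n).erase (0, 0), u ^ ((∑ j, q.1 j) + q.2)) := by
              rw [← Finset.mul_sum]
          _ ≤ a⁻¹ * ((BA * K * M ^ N * w ^ n * u) * 2 ^ (s + 1)) := by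
              apply mul_le_mul_of_nonneg_left _ (by positivity)
              apply mul_le_mul_of_nonneg_left _ (by positivity)
              calc ∑ q ∈ (box s m n).erase (0, 0), u ^ ((∑ j, q.1 j) + q.2)
                  ≤ ∑ q ∈ box s m n, u ^ ((∑ j, q.1 j) + q.2) :=
                    Finset.sum_le_sum_of_subset_of_nonneg (Finset.erase_subset _ _)
                      (fun q _ _ => by positivity)
                _ ≤ 2 ^ (s + 1) := box_sum_le m n hu0.le hu2
          _ = (K * M ^ N * w ^ n) * (BA * u * 2 ^ (s + 1) * a⁻¹) := by ring
          _ ≤ (K * M ^ N * w ^ n) * (a * a⁻¹) := by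
              apply mul_le_mul_of_nonneg_left _ (by positivity)
              exact mul_le_mul_of_nonneg_right hua (by positivity)
          _ = K * M ^ N * w ^ n := by
              rw [mul_inv_cancel₀ (ne_of_gt hapos), mul_one]
  exact fun m n => key _ m n rfl

end OhbarAux

/-- The class `𝒪^{ℏ}` is a local ring: it is closed under the Cauchy product,
and every `A ∈ 𝒪^{ℏ}` with `A(0,0) ≠ 0` has its Cauchy-product inverse again in `𝒪^{ℏ}`. -/
theorem memOhbar_localRing (s r : ℕ) (hr : 1 ≤ r) (hrs : r ≤ s) :
    (∀ A B : (Fin s → ℕ) → ℕ → ℂ, MemOhbar s r hrs A → MemOhbar s r hrs B →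
      MemOhbar s r hrs (cauchyProdN s A B)) ∧
    (∀ A : (Fin s → ℕ) → ℕ → ℂ, MemOhbar s r hrs A → A 0 0 ≠ 0 →
      ∃ A' : (Fin s → ℕ) → ℕ → ℂ,
        cauchyProdN s A A' = deltaFam s ∧ MemOhbar s r hrs A' ∧
        ∀ A'' : (Fin s → ℕ) → ℕ → ℂ, cauchyProdN s A A'' = deltaFam s → A'' = A') := by
  constructor
  · exact fun A B hA hB => OhbarAux.closure hrs A B hA hB
  · intro A hA haz
    obtain ⟨hA0, hA1, BA, CA, hBA, hCA, hA2⟩ := hA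
    refine ⟨fun m' n' => OhbarAux.invF s A (m', n'), ?_, ⟨?_, ?_, ?_⟩, ?_⟩
    · funext m n
      exact OhbarAux.cauchy_invF A haz m n
    · exact fun m => OhbarAux.invF_support hrs hA0 hA1 m
    · exact fun m n => OhbarAux.invF_weight_zero hrs hA1 m n
    · exact OhbarAux.invF_bound hrs hBA hCA hA2 haz
    · intro A'' h
      funext m n
      exact OhbarAux.invF_unique A A'' haz h m n
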